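/- Donsker–Varadhan lower bound: for finite types A, B, a joint probability mass function p on A × B with marginals pA, pB, and any function f : A × B → ℝ, the mutual information I(A;B) = ∑ D(p‖pA⊗pB) satisfies I(A;B) ≥ E_{p}[f] − log E_{pA⊗pB}[exp f]. -/

import Mathlib

/-- Donsker–Varadhan lower bound for mutual information on finite types. -/
theorem donsker_varadhan_lower_bound {A B : Type*} [Fintype A] [Fintype B]
    (p : A × B → ℝ)
    (hp0 : ∀ ab, 0 ≤ p ab) (hp1 : ∑ ab, p ab = 1)
    (hpos : ∀ a b, 0 < p (a, b) → 0 < (∑ b', p (a, b')) * (∑ a', p (a', b)))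
    (f : A × B → ℝ) :
    (∑ a, ∑ b, p (a, b) * f (a, b)) -
        Real.log (∑ a, ∑ b, ((∑ b', p (a, b')) * (∑ a', p (a', b))) * Real.exp (f (a, b)))
      ≤ ∑ a, ∑ b, p (a, b) *
          Real.log (p (a, b) / ((∑ b', p (a, b')) * (∑ a', p (a', b)))) := by
  classical
  set q : A × B → ℝ := fun ab => (∑ b', p (ab.1, b')) * (∑ a', p (a', ab.2)) with hq
  have hq0 : ∀ ab, 0 ≤ q ab := fun ab =>
    mul_nonneg (Finset.sum_nonneg fun _ _ => hp0 _) (Finset.sum_nonneg fun _ _ => hp0 _)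
  have hqpos : ∀ ab : A × B, 0 < p ab → 0 < q ab := fun ab h => hpos ab.1 ab.2 h
  have hsum1 : (∑ a, ∑ b, p (a, b) * f (a, b)) = ∑ ab, p ab * f ab := by
    rw [Fintype.sum_prod_type]
  have hsum2 : (∑ a, ∑ b, ((∑ b', p (a, b')) * (∑ a', p (a', b))) * Real.exp (f (a, b)))
      = ∑ ab, q ab * Real.exp (f ab) := by
    rw [Fintype.sum_prod_type]
  have hsum3 : (∑ a, ∑ b, p (a, b) *
      Real.log (p (a, b) / ((∑ b', p (a, b')) * (∑ a', p (a', b)))))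
      = ∑ ab, p ab * Real.log (p ab / q ab) := by
    rw [Fintype.sum_prod_type]
  rw [hsum1, hsum2, hsum3]
  set Z : ℝ := ∑ ab, q ab * Real.exp (f ab) with hZ
  have hex : ∃ ab : A × B, 0 < p ab := by
    by_contra h
    push_neg at h
    have : ∑ ab, p ab = 0 := Finset.sum_eq_zero fun ab _ => le_antisymm (h ab) (hp0 ab)
    linarith
  obtain ⟨ab0, hab0⟩ := hex
  have hZpos : 0 < Z := by
    refine Finset.sum_pos' (fun ab _ => mul_nonneg (hq0 ab) (Real.exp_pos _).le)
      ⟨ab0, Finset.mem_univ _, mul_pos (hqpos ab0 hab0) (Real.exp_pos _)⟩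
  have key : ∀ ab : A × B,
      p ab * f ab - p ab * Real.log (p ab / q ab)
        ≤ p ab * Real.log Z + q ab * Real.exp (f ab) / Z - p ab := by
    intro ab
    rcases eq_or_lt_of_le (hp0 ab) with h0 | hpp
    · rw [← h0]
      simp only [zero_mul, sub_zero, zero_sub]
      have : 0 ≤ q ab * Real.exp (f ab) / Z :=
        div_nonneg (mul_nonneg (hq0 ab) (Real.exp_pos _).le) hZpos.le
      linarith
    · have hqp := hqpos ab hpp
      have hx : 0 < q ab * Real.exp (f ab) / (p ab * Z) :=
        div_pos (mul_pos hqp (Real.exp_pos _)) (mul_pos hpp hZpos)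
      have hlog := Real.log_le_sub_one_of_pos hx
      have h1 : Real.log (q ab * Real.exp (f ab) / (p ab * Z))
          = Real.log (q ab) + f ab - Real.log (p ab) - Real.log Z := by
        rw [Real.log_div (by positivity) (by positivity), Real.log_mul hqp.ne'
          (Real.exp_pos _).ne', Real.log_mul hpp.ne' hZpos.ne', Real.log_exp]
        ring
      have h2 : Real.log (p ab / q ab) = Real.log (p ab) - Real.log (q ab) :=
        Real.log_div hpp.ne' hqp.ne'
      have h3 : p ab * (q ab * Real.exp (f ab) / (p ab * Z)) = q ab * Real.exp (f ab) / Z := by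
        field_simp
      have h4 := mul_le_mul_of_nonneg_left hlog hpp.le
      rw [h1] at h4
      rw [h2]
      nlinarith [h3, h4]
  have hsumle : ∑ ab, (p ab * f ab - p ab * Real.log (p ab / q ab))
      ≤ ∑ ab, (p ab * Real.log Z + q ab * Real.exp (f ab) / Z - p ab) :=
    Finset.sum_le_sum fun ab _ => key ab
  have hrhs : ∑ ab, (p ab * Real.log Z + q ab * Real.exp (f ab) / Z - p ab) = Real.log Z := by
    rw [Finset.sum_sub_distrib, Finset.sum_add_distrib, ← Finset.sum_mul, ← Finset.sum_div,
      hp1, ← hZ, one_mul, div_self hZpos.ne']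
    ring
  rw [Finset.sum_sub_distrib] at hsumle
  rw [hrhs] at hsumle
  linarith
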